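/- Suppose N ≥ 4, A_F > 0, φ''_{2F} ≤ 0. Then G(α) = I − α(A_F L¹)^{−1}L^{qcf} is a contraction in the U^{2,∞} norm if and only if 0 < α < 2A_F/φ''_F. The norm ‖G(α)‖_{U^{2,∞}} is minimized at α* = A_F/(A_F + 2|φ''_{2F}|) = 2A_F/(φ''_F + A_F), with minimal value (1 − A_F/φ''_F)/(1 + A_F/φ''_F) < 1. -/

import Mathlib

/-- Discrete Dirichlet Laplacian. -/
noncomputable def L1 (ε : ℝ) (v : ℤ → ℝ) (j : ℤ) : ℝ :=
  (-v (j + 1) + 2 * v j - v (j - 1)) / ε ^ 2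

/-- Linearized atomistic operator. -/
noncomputable def La (ε φF φ2F : ℝ) (v : ℤ → ℝ) (j : ℤ) : ℝ :=
  φF * ((-v (j + 1) + 2 * v j - v (j - 1)) / ε ^ 2)
    + φ2F * ((-v (j + 2) + 2 * v j - v (j - 2)) / ε ^ 2)

/-- Linearized force-based QC operator. -/
noncomputable def Lqcf (K : ℕ) (ε φF φ2F : ℝ) (v : ℤ → ℝ) (j : ℤ) : ℝ :=
  if |j| ≤ (K : ℤ) then La ε φF φ2F v j else (φF + 4 * φ2F) * L1 ε v j

/-- The U^{2,∞} norm: max of |u''_ℓ| over ℓ = -N+1,…,N-1. -/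
noncomputable def U2inf (N : ℕ) (ε : ℝ) (u : ℤ → ℝ) : ℝ :=
  ⨆ ℓ : Finset.Icc (-(N : ℤ) + 1) ((N : ℤ) - 1),
    |(u ((ℓ : ℤ) + 1) - 2 * u (ℓ : ℤ) + u ((ℓ : ℤ) - 1)) / ε ^ 2|

/-- The U^{2,∞} operator norm of G(α) = I − α(A_F L¹)⁻¹ L^{qcf}. -/
noncomputable def gnormU2inf (N K : ℕ) (ε φF φ2F α : ℝ) : ℝ :=
  sSup {r : ℝ | ∃ u z : ℤ → ℝ,
    (∀ j : ℤ, (N : ℤ) ≤ |j| → u j = 0) ∧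
    (∀ j : ℤ, (N : ℤ) ≤ |j| → z j = 0) ∧
    (∀ j ∈ Finset.Icc (-(N : ℤ) + 1) ((N : ℤ) - 1),
      (φF + 4 * φ2F) * L1 ε z j = α * Lqcf K ε φF φ2F u j) ∧
    U2inf N ε u = 1 ∧ r = U2inf N ε (u - z)}

lemma inner_alg (A ε α φF φ2F u2 u1 u0 um1 um2 z1 z0 zm1 : ℝ) (hε : ε ≠ 0) (hA : A ≠ 0)
    (heq : A * ((-z1 + 2*z0 - zm1)/ε^2)
      = α * (φF * ((-u1 + 2*u0 - um1)/ε^2) + φ2F * ((-u2 + 2*u0 - um2)/ε^2))) :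
    ((u1 - z1) - 2*(u0 - z0) + (um1 - zm1))/ε^2
      = (1 - α*((φF+2*φ2F)/A)) * ((u1 - 2*u0 + um1)/ε^2)
        - (α*φ2F/A) * ((u0 - 2*um1 + um2)/ε^2 + (u2 - 2*u1 + u0)/ε^2) := by
  field_simp at heq ⊢
  linear_combination heq

lemma outer_alg (A ε α u1 u0 um1 z1 z0 zm1 : ℝ) (hε : ε ≠ 0) (hA : A ≠ 0)
    (heq : A * ((-z1 + 2*z0 - zm1)/ε^2) = α * (A * ((-u1 + 2*u0 - um1)/ε^2))) :
    ((u1 - z1) - 2*(u0 - z0) + (um1 - zm1))/ε^2 = (1 - α) * ((u1 - 2*u0 + um1)/ε^2) := by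
  have h2 : (-z1 + 2*z0 - zm1)/ε^2 = α * ((-u1 + 2*u0 - um1)/ε^2) := by
    apply mul_left_cancel₀ hA
    rw [heq]; ring
  field_simp at h2 ⊢
  linear_combination h2

lemma term_bound (N K : ℕ) (hN : 4 ≤ N) (hK : K + 2 ≤ N) (ε φF φ2F α : ℝ)
    (hε : ε ≠ 0) (hAF : 0 < φF + 4 * φ2F) (hφ : φ2F ≤ 0) (u z : ℤ → ℝ)
    (heq : ∀ j ∈ Finset.Icc (-(N : ℤ) + 1) ((N : ℤ) - 1),
      (φF + 4 * φ2F) * L1 ε z j = α * Lqcf K ε φF φ2F u j)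
    (hu : ∀ j ∈ Finset.Icc (-(N : ℤ) + 1) ((N : ℤ) - 1),
      |(u (j + 1) - 2 * u j + u (j - 1)) / ε ^ 2| ≤ 1)
    (ℓ : ℤ) (hℓ : ℓ ∈ Finset.Icc (-(N : ℤ) + 1) ((N : ℤ) - 1)) :
    |((u - z) (ℓ + 1) - 2 * (u - z) ℓ + (u - z) (ℓ - 1)) / ε ^ 2|
      ≤ |1 - α * ((φF + 2 * φ2F) / (φF + 4 * φ2F))|
        + |α| * (-2 * φ2F / (φF + 4 * φ2F)) := by
  have hA : (φF + 4 * φ2F) ≠ 0 := ne_of_gt hAF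
  have hIcc := hℓ
  rw [Finset.mem_Icc] at hIcc
  have h := heq ℓ hℓ
  simp only [Pi.sub_apply]
  by_cases hk : |ℓ| ≤ (K : ℤ)
  · -- inner case
    rw [Lqcf, if_pos hk, La, L1] at h
    have key := inner_alg (φF + 4*φ2F) ε α φF φ2F (u (ℓ+2)) (u (ℓ+1)) (u ℓ) (u (ℓ-1)) (u (ℓ-2))
      (z (ℓ+1)) (z ℓ) (z (ℓ-1)) hε hA h
    rw [key]
    have hkk : -((N:ℤ) - 2) ≤ ℓ ∧ ℓ ≤ (N:ℤ) - 2 := by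
      rw [abs_le] at hk; omega
    have hb0 : |(u (ℓ + 1) - 2 * u ℓ + u (ℓ - 1)) / ε ^ 2| ≤ 1 := hu ℓ hℓ
    have hbm : |(u ℓ - 2 * u (ℓ-1) + u (ℓ-2)) / ε ^ 2| ≤ 1 := by
      have := hu (ℓ - 1) (by rw [Finset.mem_Icc]; omega)
      rw [show ℓ - 1 + 1 = ℓ by ring, show ℓ - 1 - 1 = ℓ - 2 by ring] at this
      exact this
    have hbp : |(u (ℓ+2) - 2 * u (ℓ+1) + u ℓ) / ε ^ 2| ≤ 1 := by
      have := hu (ℓ + 1) (by rw [Finset.mem_Icc]; omega)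
      rw [show ℓ + 1 + 1 = ℓ + 2 by ring, show ℓ + 1 - 1 = ℓ by ring] at this
      exact this
    have habs : |α * φ2F / (φF + 4*φ2F)| = |α| * (-φ2F / (φF + 4*φ2F)) := by
      rw [abs_div, abs_mul, abs_of_pos hAF, abs_of_nonpos hφ]
      ring
    calc |(1 - α*((φF+2*φ2F)/(φF+4*φ2F))) * ((u (ℓ+1) - 2*u ℓ + u (ℓ-1))/ε^2)
          - (α*φ2F/(φF+4*φ2F)) * ((u ℓ - 2*u (ℓ-1) + u (ℓ-2))/ε^2 + (u (ℓ+2) - 2*u (ℓ+1) + u ℓ)/ε^2)|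
        ≤ |(1 - α*((φF+2*φ2F)/(φF+4*φ2F))) * ((u (ℓ+1) - 2*u ℓ + u (ℓ-1))/ε^2)|
          + |(α*φ2F/(φF+4*φ2F)) * ((u ℓ - 2*u (ℓ-1) + u (ℓ-2))/ε^2 + (u (ℓ+2) - 2*u (ℓ+1) + u ℓ)/ε^2)| :=
          abs_sub _ _
      _ ≤ |1 - α*((φF+2*φ2F)/(φF+4*φ2F))| * 1
          + |α * φ2F / (φF + 4*φ2F)| * (|(u ℓ - 2*u (ℓ-1) + u (ℓ-2))/ε^2| + |(u (ℓ+2) - 2*u (ℓ+1) + u ℓ)/ε^2|) := by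
          rw [abs_mul, abs_mul]
          gcongr
          · exact abs_add_le _ _
      _ ≤ |1 - α*((φF+2*φ2F)/(φF+4*φ2F))| + |α| * (-2 * φ2F / (φF + 4*φ2F)) := by
          rw [habs]
          have h1 : 0 ≤ |α| := abs_nonneg α
          have h2 : 0 ≤ -φ2F / (φF + 4*φ2F) := div_nonneg (by linarith) hAF.le
          have h3 := mul_le_mul_of_nonneg_left (add_le_add hbm hbp) (mul_nonneg h1 h2)
          have h4 : |α| * (-φ2F/(φF+4*φ2F)) * (1+1) = |α| * (-2*φ2F/(φF+4*φ2F)) := by ring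
          linarith
  · -- outer case
    rw [Lqcf, if_neg hk, L1, L1] at h
    have key := outer_alg (φF + 4*φ2F) ε α (u (ℓ+1)) (u ℓ) (u (ℓ-1)) (z (ℓ+1)) (z ℓ) (z (ℓ-1)) hε hA h
    rw [key, abs_mul]
    have hb0 : |(u (ℓ + 1) - 2 * u ℓ + u (ℓ - 1)) / ε ^ 2| ≤ 1 := hu ℓ hℓ
    have h1a : |1 - α| ≤ |1 - α * ((φF + 2*φ2F)/(φF + 4*φ2F))| + |α| * (-2 * φ2F / (φF + 4*φ2F)) := by
      have e : (1 : ℝ) - α = (1 - α * ((φF + 2*φ2F)/(φF + 4*φ2F))) + α * (-2 * φ2F / (φF + 4*φ2F)) := by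
        have : α * ((φF + 2*φ2F)/(φF + 4*φ2F)) - α * (-2 * φ2F / (φF + 4*φ2F)) = α := by
          rw [← mul_sub, ← sub_div, show φF + 2*φ2F - -2*φ2F = φF + 4*φ2F by ring, div_self hA, mul_one]
        linarith
      rw [e]
      calc |(1 - α * ((φF + 2*φ2F)/(φF + 4*φ2F))) + α * (-2 * φ2F / (φF + 4*φ2F))|
          ≤ |1 - α * ((φF + 2*φ2F)/(φF + 4*φ2F))| + |α * (-2 * φ2F / (φF + 4*φ2F))| := abs_add_le _ _
        _ = |1 - α * ((φF + 2*φ2F)/(φF + 4*φ2F))| + |α| * |(-2 * φ2F / (φF + 4*φ2F))| := by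
            rw [abs_mul]
        _ = _ := by
            rw [abs_of_nonneg (div_nonneg (by linarith) hAF.le : (0:ℝ) ≤ -2 * φ2F / (φF + 4*φ2F))]
    calc |1 - α| * |(u (ℓ + 1) - 2 * u ℓ + u (ℓ - 1)) / ε ^ 2| ≤ |1 - α| * 1 := by
          gcongr
      _ = |1 - α| := mul_one _
      _ ≤ _ := h1a

noncomputable def Grn (N : ℕ) (j k : ℤ) : ℝ :=
  -(((N : ℤ) - max j k) * ((N : ℤ) + min j k) : ℤ) / (2 * N)

lemma Grn_diff (N : ℕ) (hN : 1 ≤ N) (j k : ℤ) :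
    Grn N (j + 1) k - 2 * Grn N j k + Grn N (j - 1) k
      = if k = j then 1 else 0 := by
  have hN0 : (2 * N : ℝ) ≠ 0 := by positivity
  unfold Grn
  rcases lt_trichotomy k j with h | h | h
  · rw [if_neg (by omega)]
    rw [show max (j+1) k = j+1 by omega, show max j k = j by omega,
      show max (j-1) k = j-1 by omega, show min (j+1) k = k by omega,
      show min j k = k by omega, show min (j-1) k = k by omega]
    push_cast; field_simp; ring
  · subst h
    rw [if_pos rfl]
    rw [show max (k+1) k = k+1 by omega, show max k k = k by omega,
      show max (k-1) k = k by omega, show min (k+1) k = k by omega,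
      show min k k = k by omega, show min (k-1) k = k-1 by omega]
    push_cast; field_simp; ring
  · rw [if_neg (by omega)]
    rw [show max (j+1) k = k by omega, show max j k = k by omega,
      show max (j-1) k = k by omega, show min (j+1) k = j+1 by omega,
      show min j k = j by omega, show min (j-1) k = j-1 by omega]
    push_cast; field_simp; ring

lemma dirichlet_exists (N : ℕ) (hN : 1 ≤ N) (c : ℤ → ℝ) :
    ∃ z : ℤ → ℝ, (∀ j : ℤ, (N : ℤ) ≤ |j| → z j = 0) ∧
      ∀ j ∈ Finset.Icc (-(N : ℤ) + 1) ((N : ℤ) - 1),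
        z (j + 1) - 2 * z j + z (j - 1) = c j := by
  classical
  set I := Finset.Icc (-(N : ℤ) + 1) ((N : ℤ) - 1) with hI
  set z : ℤ → ℝ := fun j => if (N : ℤ) ≤ |j| then 0 else ∑ k ∈ I, Grn N j k * c k
    with hz
  refine ⟨z, ?_, ?_⟩
  · intro j hj; simp [hz, hj]
  · intro j hj
    rw [hI, Finset.mem_Icc] at hj
    have key : ∀ i : ℤ, |i| ≤ (N : ℤ) → z i = ∑ k ∈ I, Grn N i k * c k := by
      intro i hi
      by_cases h : (N : ℤ) ≤ |i|
      · rw [hz]; simp only []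
        rw [if_pos h]
        have hiN : i = N ∨ i = -(N : ℤ) := by
          rcases abs_cases i with ⟨h1, _⟩ | ⟨h1, _⟩ <;> omega
        symm
        apply Finset.sum_eq_zero
        intro k hk
        rw [hI, Finset.mem_Icc] at hk
        rcases hiN with rfl | rfl
        · have hm : max (N : ℤ) k = N := max_eq_left (by omega)
          simp [Grn, hm]
        · have hm : min (-(N:ℤ)) k = -(N:ℤ) := min_eq_left (by omega)
          simp [Grn, hm]
      · rw [hz]; simp only []; rw [if_neg h]
    have habs : ∀ i : ℤ, -(N:ℤ) ≤ i → i ≤ (N:ℤ) → |i| ≤ (N:ℤ) := by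
      intro i h1 h2; rw [abs_le]; omega
    rw [key _ (habs _ (by omega) (by omega)), key _ (habs _ (by omega) (by omega)),
      key _ (habs _ (by omega) (by omega))]
    have hcomb : (∑ k ∈ I, Grn N (j+1) k * c k) - 2 * (∑ k ∈ I, Grn N j k * c k)
        + (∑ k ∈ I, Grn N (j-1) k * c k)
        = ∑ k ∈ I, (Grn N (j+1) k - 2 * Grn N j k + Grn N (j-1) k) * c k := by
      rw [Finset.mul_sum, ← Finset.sum_sub_distrib, ← Finset.sum_add_distrib]
      exact Finset.sum_congr rfl (fun k _ => by ring)
    rw [hcomb]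
    simp_rw [Grn_diff N hN]
    simp only [ite_mul, one_mul, zero_mul]
    rw [Finset.sum_ite_eq' I j c]
    rw [if_pos (by rw [hI, Finset.mem_Icc]; omega)]

lemma U2inf_le (N : ℕ) (hN : 4 ≤ N) (ε : ℝ) (u : ℤ → ℝ) (M : ℝ)
    (h : ∀ j ∈ Finset.Icc (-(N : ℤ) + 1) ((N : ℤ) - 1),
      |(u (j + 1) - 2 * u j + u (j - 1)) / ε ^ 2| ≤ M) :
    U2inf N ε u ≤ M := by
  haveI : Nonempty (Finset.Icc (-(N : ℤ) + 1) ((N : ℤ) - 1)) :=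
    ⟨⟨0, by rw [Finset.mem_Icc]; omega⟩⟩
  exact ciSup_le fun ℓ => h ℓ ℓ.2

lemma le_U2inf (N : ℕ) (ε : ℝ) (u : ℤ → ℝ) (j : ℤ)
    (hj : j ∈ Finset.Icc (-(N : ℤ) + 1) ((N : ℤ) - 1)) :
    |(u (j + 1) - 2 * u j + u (j - 1)) / ε ^ 2| ≤ U2inf N ε u :=
  le_ciSup (f := fun ℓ : Finset.Icc (-(N : ℤ) + 1) ((N : ℤ) - 1) =>
      |(u ((ℓ : ℤ) + 1) - 2 * u (ℓ : ℤ) + u ((ℓ : ℤ) - 1)) / ε ^ 2|)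
    (Set.Finite.bddAbove (Set.finite_range _)) ⟨j, hj⟩

lemma exists_unit (N : ℕ) (hN : 4 ≤ N) (ε s t : ℝ) (hε : ε ≠ 0) :
    ∃ u : ℤ → ℝ, (∀ j : ℤ, (N : ℤ) ≤ |j| → u j = 0) ∧
      (∀ j ∈ Finset.Icc (-(N : ℤ) + 1) ((N : ℤ) - 1),
        (u (j + 1) - 2 * u j + u (j - 1)) / ε ^ 2
          = if j = 0 then s else if j = 1 ∨ j = -1 then t else 0) := by
  classical
  have hNR : (0 : ℝ) < (N : ℝ) := by
    have : (4 : ℝ) ≤ (N : ℝ) := by exact_mod_cast hN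
    linarith
  have hNR0 : (N : ℝ) ≠ 0 := ne_of_gt hNR
  set c0 : ℝ := ε ^ 2 * s with hc0
  set c1 : ℝ := ε ^ 2 * t with hc1
  set u0 : ℝ := -((N : ℝ) * c0 + 2 * ((N : ℝ) - 1) * c1) / 2 with hu0
  set β : ℝ := (u0 - c1) / (N : ℝ) with hβ
  set u : ℤ → ℝ := fun j => if j = 0 then u0 else β * (((max 0 ((N : ℤ) - |j|)) : ℤ) : ℝ)
    with hu
  have hval : ∀ j : ℤ, j ≠ 0 → |j| ≤ (N : ℤ) → u j = β * ((N : ℝ) - ((|j| : ℤ) : ℝ)) := by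
    intro j h0 hle
    rw [hu]
    simp only []
    rw [if_neg h0, max_eq_right (by omega : (0 : ℤ) ≤ (N : ℤ) - |j|)]
    push_cast
    ring
  have hsupp : ∀ j : ℤ, (N : ℤ) ≤ |j| → u j = 0 := by
    intro j hj
    rw [hu]
    simp only []
    rw [if_neg (by intro h; rw [h] at hj; simp at hj; omega),
      max_eq_left (by omega : (N : ℤ) - |j| ≤ 0)]
    simp
  refine ⟨u, hsupp, ?_⟩
  intro j hj
  rw [Finset.mem_Icc] at hj
  have h00 : u 0 = u0 := by rw [hu]; simp
  by_cases h0 : j = 0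
  · subst h0
    rw [if_pos rfl]
    norm_num
    rw [hval 1 (by omega) (by rw [show |(1:ℤ)| = 1 from rfl]; omega),
      hval (-1) (by omega) (by rw [show |(-1:ℤ)| = 1 from rfl]; omega), h00,
      show |(1:ℤ)| = 1 from rfl, show |(-1:ℤ)| = 1 from rfl]
    rw [hβ, hu0, hc0, hc1]
    push_cast
    field_simp
    ring
  · by_cases h1 : j = 1
    · subst h1
      rw [if_neg h0, if_pos (Or.inl rfl)]
      norm_num
      rw [hval 2 (by omega) (by rw [show |(2:ℤ)| = 2 from rfl]; omega),
        hval 1 (by omega) (by rw [show |(1:ℤ)| = 1 from rfl]; omega), h00,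
        show |(2:ℤ)| = 2 from rfl, show |(1:ℤ)| = 1 from rfl]
      rw [hβ, hu0, hc0, hc1]
      push_cast
      field_simp
      ring
    · by_cases hm1 : j = -1
      · subst hm1
        rw [if_neg h0, if_pos (Or.inr rfl)]
        norm_num
        rw [hval (-2) (by omega) (by rw [show |(-2:ℤ)| = 2 from rfl]; omega),
          hval (-1) (by omega) (by rw [show |(-1:ℤ)| = 1 from rfl]; omega), h00,
          show |(-2:ℤ)| = 2 from rfl, show |(-1:ℤ)| = 1 from rfl]
        rw [hβ, hu0, hc0, hc1]
        push_cast
        field_simp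
        ring
      · rw [if_neg h0, if_neg (by tauto)]
        rcases lt_or_gt_of_ne h0 with hneg | hpos
        · -- j ≤ -2
          have hj2 : j ≤ -2 := by omega
          rw [hval (j+1) (by omega) (by rw [abs_of_nonpos (by omega : j + 1 ≤ 0)]; omega),
            hval j (by omega) (by rw [abs_of_nonpos (by omega : j ≤ 0)]; omega),
            hval (j-1) (by omega) (by rw [abs_of_nonpos (by omega : j - 1 ≤ 0)]; omega),
            abs_of_nonpos (by omega : j + 1 ≤ 0), abs_of_nonpos (by omega : j ≤ 0),
            abs_of_nonpos (by omega : j - 1 ≤ 0)]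
          push_cast
          field_simp
          ring
        · -- j ≥ 2
          have hj2 : 2 ≤ j := by omega
          rw [hval (j+1) (by omega) (by rw [abs_of_nonneg (by omega : (0:ℤ) ≤ j + 1)]; omega),
            hval j (by omega) (by rw [abs_of_nonneg (by omega : (0:ℤ) ≤ j)]; omega),
            hval (j-1) (by omega) (by rw [abs_of_nonneg (by omega : (0:ℤ) ≤ j - 1)]; omega),
            abs_of_nonneg (by omega : (0:ℤ) ≤ j + 1), abs_of_nonneg (by omega : (0:ℤ) ≤ j),
            abs_of_nonneg (by omega : (0:ℤ) ≤ j - 1)]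
          push_cast
          field_simp
          ring

lemma gnorm_eq (N K : ℕ) (hN : 4 ≤ N) (hK : K + 2 ≤ N) (ε φF φ2F α : ℝ)
    (hε : ε = 1 / N) (hAF : 0 < φF + 4 * φ2F) (hφ : φ2F ≤ 0) :
    gnormU2inf N K ε φF φ2F α
      = |1 - α * ((φF + 2 * φ2F) / (φF + 4 * φ2F))|
        + |α| * (-2 * φ2F / (φF + 4 * φ2F)) := by
  classical
  have hNR : (0 : ℝ) < (N : ℝ) := by
    have : (4 : ℝ) ≤ (N : ℝ) := by exact_mod_cast hN
    linarith
  have hε0 : ε ≠ 0 := by rw [hε]; positivity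
  have hA : (φF + 4 * φ2F) ≠ 0 := ne_of_gt hAF
  set Fm : ℝ := |1 - α * ((φF + 2 * φ2F) / (φF + 4 * φ2F))|
      + |α| * (-2 * φ2F / (φF + 4 * φ2F)) with hFm
  have hFm0 : 0 ≤ Fm := by
    rw [hFm]
    have := div_nonneg (by linarith : (0:ℝ) ≤ -2 * φ2F) hAF.le
    have := abs_nonneg (1 - α * ((φF + 2 * φ2F) / (φF + 4 * φ2F)))
    have := abs_nonneg α
    nlinarith
  have h0mem : (0 : ℤ) ∈ Finset.Icc (-(N : ℤ) + 1) ((N : ℤ) - 1) := by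
    rw [Finset.mem_Icc]; omega
  -- upper bound for all elements of the set
  have hub : ∀ x ∈ {r : ℝ | ∃ u z : ℤ → ℝ,
      (∀ j : ℤ, (N : ℤ) ≤ |j| → u j = 0) ∧
      (∀ j : ℤ, (N : ℤ) ≤ |j| → z j = 0) ∧
      (∀ j ∈ Finset.Icc (-(N : ℤ) + 1) ((N : ℤ) - 1),
        (φF + 4 * φ2F) * L1 ε z j = α * Lqcf K ε φF φ2F u j) ∧
      U2inf N ε u = 1 ∧ r = U2inf N ε (u - z)}, x ≤ Fm := by
    rintro x ⟨u, z, hu0, hz0, heq3, hu1, rfl⟩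
    apply U2inf_le N hN
    intro j hj
    apply term_bound N K hN hK ε φF φ2F α hε0 hAF hφ u z heq3 _ j hj
    intro i hi
    have := le_U2inf N ε u i hi
    rw [hu1] at this
    exact this
  -- the element attaining the norm
  set s : ℝ := if 0 ≤ 1 - α * ((φF + 2 * φ2F) / (φF + 4 * φ2F)) then 1 else -1 with hs
  set t : ℝ := if α * φ2F ≤ 0 then 1 else -1 with ht
  have hs1 : |s| = 1 := by rw [hs]; split_ifs <;> simp
  have ht1 : |t| = 1 := by rw [ht]; split_ifs <;> simp
  obtain ⟨u, hu0, hw⟩ := exists_unit N hN ε s t hε0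
  have hwle : ∀ j ∈ Finset.Icc (-(N : ℤ) + 1) ((N : ℤ) - 1),
      |(u (j + 1) - 2 * u j + u (j - 1)) / ε ^ 2| ≤ 1 := by
    intro j hj
    rw [hw j hj]
    split_ifs <;> simp [hs1, ht1]
  have hU1 : U2inf N ε u = 1 := by
    apply le_antisymm (U2inf_le N hN ε u 1 hwle)
    have h1 := le_U2inf N ε u 0 h0mem
    rw [hw 0 h0mem, if_pos rfl] at h1
    rw [hs1] at h1
    exact h1
  obtain ⟨z, hz0, hzeq⟩ := dirichlet_exists N (by omega)
    (fun j => -(ε ^ 2 * α * Lqcf K ε φF φ2F u j) / (φF + 4 * φ2F))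
  have heq3 : ∀ j ∈ Finset.Icc (-(N : ℤ) + 1) ((N : ℤ) - 1),
      (φF + 4 * φ2F) * L1 ε z j = α * Lqcf K ε φF φ2F u j := by
    intro j hj
    have hz := hzeq j hj
    rw [L1, show -z (j+1) + 2 * z j - z (j-1) = -(z (j + 1) - 2 * z j + z (j - 1)) by ring,
      hz]
    field_simp
  -- value at 0
  have h3 := heq3 0 h0mem
  rw [Lqcf, if_pos (by simp), La, L1] at h3
  have key := inner_alg (φF + 4 * φ2F) ε α φF φ2F (u (0+2)) (u (0+1)) (u 0) (u (0-1)) (u (0-2))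
    (z (0+1)) (z 0) (z (0-1)) hε0 hA h3
  have hw0 : (u (0 + 1) - 2 * u 0 + u (0 - 1)) / ε ^ 2 = s := by
    have := hw 0 h0mem; rwa [if_pos rfl] at this
  have hwp : (u (0+2) - 2 * u (0+1) + u 0) / ε ^ 2 = t := by
    have := hw 1 (by rw [Finset.mem_Icc]; omega)
    rw [if_neg (by omega), if_pos (Or.inl rfl)] at this
    rw [show (0:ℤ)+2 = 1+1 by ring, show (0:ℤ)+1 = 1 by ring,
      show (u 0 : ℝ) = u (1-1) from by norm_num]
    exact this
  have hwm : (u 0 - 2 * u (0-1) + u (0-2)) / ε ^ 2 = t := by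
    have := hw (-1) (by rw [Finset.mem_Icc]; omega)
    rw [if_neg (by omega), if_pos (Or.inr rfl)] at this
    rw [show (0:ℤ)-1 = -1 by ring, show (0:ℤ)-2 = (-1)-1 by ring,
      show (u 0 : ℝ) = u (-1+1) from by norm_num]
    exact this
  rw [hw0, hwp, hwm] at key
  -- key : ((u-z) term at 0) = (1 - αB)*s - (αφ2F/A)*(t+t)
  have hSeq : (1 - α * ((φF + 2 * φ2F) / (φF + 4 * φ2F))) * s
      = |1 - α * ((φF + 2 * φ2F) / (φF + 4 * φ2F))| := by
    rw [hs]
    split_ifs with h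
    · rw [abs_of_nonneg h]; ring
    · rw [abs_of_neg (by linarith)]; ring
  have hTeq : -(α * φ2F / (φF + 4 * φ2F)) * (t + t) = |α| * (-2 * φ2F / (φF + 4 * φ2F)) := by
    have hT' : α * φ2F * t = |α| * φ2F := by
      rw [ht]
      split_ifs with h
      · rcases abs_cases α with ⟨ha, _⟩ | ⟨ha, hneg⟩
        · rw [ha]; ring
        · rw [ha]
          have h2 : 0 ≤ α * φ2F := by nlinarith
          have h0 : α * φ2F = 0 := le_antisymm h h2
          linear_combination 2 * h0
      · push_neg at h
        rcases abs_cases α with ⟨ha, hpos⟩ | ⟨ha, _⟩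
        · exfalso
          have : α * φ2F ≤ 0 := mul_nonpos_of_nonneg_of_nonpos hpos hφ
          linarith
        · rw [ha]; ring
    rw [show -(α * φ2F / (φF + 4 * φ2F)) * (t + t)
        = -(α * φ2F * t) * 2 / (φF + 4 * φ2F) by ring, hT']
    ring
  have hterm0 : ((u - z) (0 + 1) - 2 * (u - z) 0 + (u - z) (0 - 1)) / ε ^ 2 = Fm := by
    simp only [Pi.sub_apply]
    rw [key, hFm, ← hSeq, ← hTeq]
    ring
  have hgoal : U2inf N ε (u - z) = Fm := by
    apply le_antisymm
    · apply U2inf_le N hN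
      intro j hj
      exact term_bound N K hN hK ε φF φ2F α hε0 hAF hφ u z heq3 hwle j hj
    · have h1 := le_U2inf N ε (u - z) 0 h0mem
      rw [hterm0, abs_of_nonneg hFm0] at h1
      exact h1
  have hmem : Fm ∈ {r : ℝ | ∃ u z : ℤ → ℝ,
      (∀ j : ℤ, (N : ℤ) ≤ |j| → u j = 0) ∧
      (∀ j : ℤ, (N : ℤ) ≤ |j| → z j = 0) ∧
      (∀ j ∈ Finset.Icc (-(N : ℤ) + 1) ((N : ℤ) - 1),
        (φF + 4 * φ2F) * L1 ε z j = α * Lqcf K ε φF φ2F u j) ∧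
      U2inf N ε u = 1 ∧ r = U2inf N ε (u - z)} :=
    ⟨u, z, hu0, hz0, heq3, hU1, hgoal.symm⟩
  rw [gnormU2inf]
  exact le_antisymm (Real.sSup_le hub hFm0) (le_csSup ⟨Fm, hub⟩ hmem)

lemma core_iff (b α : ℝ) (hb : 0 ≤ b) :
    |1 - α * (1 + b)| + |α| * b < 1 ↔ 0 < α ∧ α * (1 + 2 * b) < 2 := by
  constructor
  · intro h
    have h1 : 0 < α := by
      by_contra hc
      push_neg at hc
      have e1 : 1 - α * (1 + b) ≤ |1 - α * (1 + b)| := le_abs_self _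
      have e2 : 0 ≤ |α| * b := mul_nonneg (abs_nonneg _) hb
      nlinarith
    refine ⟨h1, ?_⟩
    rw [abs_of_pos h1] at h
    rcases le_or_gt (α * (1 + b)) 1 with hc | hc
    · rw [abs_of_nonneg (by linarith)] at h
      nlinarith
    · rw [abs_of_neg (by linarith)] at h
      nlinarith
  · rintro ⟨h1, h2⟩
    rw [abs_of_pos h1]
    rcases le_or_gt (α * (1 + b)) 1 with hc | hc
    · rw [abs_of_nonneg (by linarith)]
      nlinarith
    · rw [abs_of_neg (by linarith)]
      nlinarith

lemma core_min (b α : ℝ) (hb : 0 ≤ b) :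
    b / (1 + b) ≤ |1 - α * (1 + b)| + |α| * b := by
  have k1 : 1 ≤ |1 - α * (1 + b)| + |α| * (1 + b) := by
    have := abs_add_le (1 - α * (1 + b)) (α * (1 + b))
    simp only [sub_add_cancel, abs_one] at this
    rw [abs_mul, abs_of_nonneg (by linarith : (0:ℝ) ≤ 1 + b)] at this
    linarith
  rw [div_le_iff₀ (by linarith : (0:ℝ) < 1 + b)]
  have h1 : 0 ≤ |1 - α * (1 + b)| := abs_nonneg _
  have h2 : 0 ≤ |α| := abs_nonneg _
  nlinarith

/-- G(α) is a contraction in U^{2,∞} iff 0 < α < 2A_F/φF'';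
the norm is minimized at α* = A_F/(A_F+2|φ2F|) = 2A_F/(φF''+A_F) with minimal
value (1 − A_F/φF'')/(1 + A_F/φF'') < 1. -/
theorem qcl_preconditioner_contraction_U2inf
    (N K : ℕ) (hN : 4 ≤ N) (hK : K + 2 ≤ N) (ε φF φ2F : ℝ)
    (hε : ε = 1 / N) (hAF : 0 < φF + 4 * φ2F) (hφ : φ2F ≤ 0) :
    (∀ α : ℝ, gnormU2inf N K ε φF φ2F α < 1 ↔
      (0 < α ∧ α < 2 * (φF + 4 * φ2F) / φF)) ∧
    ((φF + 4 * φ2F) / ((φF + 4 * φ2F) + 2 * |φ2F|)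
        = 2 * (φF + 4 * φ2F) / (φF + (φF + 4 * φ2F))) ∧
    (∀ α : ℝ,
      gnormU2inf N K ε φF φ2F ((φF + 4 * φ2F) / ((φF + 4 * φ2F) + 2 * |φ2F|))
        ≤ gnormU2inf N K ε φF φ2F α) ∧
    gnormU2inf N K ε φF φ2F ((φF + 4 * φ2F) / ((φF + 4 * φ2F) + 2 * |φ2F|))
      = (1 - (φF + 4 * φ2F) / φF) / (1 + (φF + 4 * φ2F) / φF) ∧
    (1 - (φF + 4 * φ2F) / φF) / (1 + (φF + 4 * φ2F) / φF) < 1 := by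
  have hφF : 0 < φF := by linarith
  have hden : 0 < φF + 2 * φ2F := by linarith
  have habsφ : |φ2F| = -φ2F := abs_of_nonpos hφ
  have hG := fun α => gnorm_eq N K hN hK ε φF φ2F α hε hAF hφ
  set b : ℝ := -2 * φ2F / (φF + 4 * φ2F) with hbdef
  have hb : 0 ≤ b := div_nonneg (by linarith) hAF.le
  have hBb : (φF + 2 * φ2F) / (φF + 4 * φ2F) = 1 + b := by
    rw [hbdef, add_div' _ _ _ (ne_of_gt hAF)]; ring
  have hne1 : φF + 4 * φ2F ≠ 0 := ne_of_gt hAF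
  have hne2 : φF + 2 * φ2F ≠ 0 := ne_of_gt hden
  have hneφ : φF ≠ 0 := ne_of_gt hφF
  have hb1' : (0:ℝ) < 1 + b := by
    rw [← hBb]; exact div_pos hden hAF
  have hb1 : (1:ℝ) + b ≠ 0 := ne_of_gt hb1'
  have hFm : ∀ α : ℝ, gnormU2inf N K ε φF φ2F α = |1 - α * (1 + b)| + |α| * b := by
    intro α; rw [hG α, hBb]
  set a : ℝ := (φF + 4 * φ2F) / ((φF + 4 * φ2F) + 2 * |φ2F|) with hadef
  have hden2 : (φF + 4 * φ2F) + 2 * |φ2F| = φF + 2 * φ2F := by rw [habsφ]; ring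
  have ha0 : 0 < a := by rw [hadef, hden2]; exact div_pos hAF hden
  have ha1 : a * (1 + b) = 1 := by
    rw [hadef, hden2, ← hBb]
    field_simp
    exact div_self (ne_of_gt (by linarith))
  have haa : a = 1 / (1 + b) := by rw [eq_div_iff hb1]; exact ha1
  have hminval : |1 - a * (1 + b)| + |a| * b = b / (1 + b) := by
    rw [ha1, abs_of_pos ha0]
    simp only [sub_self, abs_zero, zero_add]
    rw [haa]; ring
  refine ⟨?_, ?_, ?_, ?_, ?_⟩
  · intro α
    rw [hFm α, core_iff b α hb]
    have hfeq : φF = (φF + 4 * φ2F) * (1 + 2 * b) := by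
      rw [hbdef]; field_simp; ring
    constructor
    · rintro ⟨h1, h2⟩
      refine ⟨h1, ?_⟩
      rw [lt_div_iff₀ hφF]
      nlinarith
    · rintro ⟨h1, h2⟩
      rw [lt_div_iff₀ hφF] at h2
      refine ⟨h1, ?_⟩
      nlinarith
  · rw [hadef, hden2, div_eq_div_iff hne2 (by positivity : φF + (φF + 4 * φ2F) ≠ 0)]
    ring
  · intro α
    rw [hFm, hFm, hminval]
    exact core_min b α hb
  · rw [hFm, hminval]
    have h1 : (0:ℝ) < 1 + (φF + 4 * φ2F) / φF := by
      have := div_pos hAF hφF; linarith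
    rw [div_eq_div_iff hb1 (ne_of_gt h1), hbdef]
    field_simp
    have e : φ2F * 4 + φF ≠ 0 := ne_of_gt (by linarith)
    linear_combination (-4*φ2F) * (mul_inv_cancel₀ e)
  · have hx : 0 < (φF + 4 * φ2F) / φF := div_pos hAF hφF
    rw [div_lt_one (by linarith)]
    linarith
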